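/- Let f : [a,b] → ℝ be a convex Riemann integrable function and t ∈ [0,1]. Then f(tb+(1-t)a) ≤ (1-t)∫₀¹ f(tα(b-a)+a) dα + t∫₀¹ f((1-t)α(b-a)+tb+(1-t)a) dα ≤ t·f(b)+(1-t)·f(a). -/

import Mathlib

open MeasureTheory Set

lemma hh_aux (f : ℝ → ℝ) (c d : ℝ) (hcd : c ≤ d) (hconv : ConvexOn ℝ (Icc c d) f)
    (hint : IntervalIntegrable f volume c d) :
    f ((c + d) / 2) ≤ (∫ α in (0:ℝ)..1, f (α * (d - c) + c)) ∧
      (∫ α in (0:ℝ)..1, f (α * (d - c) + c)) ≤ (f c + f d) / 2 := by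
  rcases eq_or_lt_of_le hcd with rfl | hlt
  · simp
  have hg : IntervalIntegrable (fun α => f (α * (d - c) + c)) volume 0 1 := by
    have h1 := hint.comp_add_right c
    have h2 := h1.comp_mul_right (c := d - c)
    simpa [sub_ne_zero.2 hlt.ne', div_self] using h2
  have hg' : IntervalIntegrable (fun α => f ((1 - α) * (d - c) + c)) volume 0 1 := by
    have := hg.comp_sub_left 1
    simpa using this.symm
  have mem : ∀ α ∈ Icc (0:ℝ) 1, α * (d - c) + c ∈ Icc c d := by
    intro α hα
    constructor <;> nlinarith [hα.1, hα.2]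
  constructor
  · have key : ∀ α ∈ Icc (0:ℝ) 1,
        f ((c + d) / 2) ≤ (f (α * (d - c) + c) + f ((1 - α) * (d - c) + c)) / 2 := by
      intro α hα
      have h1 := mem α hα
      have h2 : (1 - α) * (d - c) + c ∈ Icc c d := by
        constructor <;> nlinarith [hα.1, hα.2]
      have := hconv.2 h1 h2 (by norm_num : (0:ℝ) ≤ 1/2) (by norm_num : (0:ℝ) ≤ 1/2)
        (by norm_num)
      have harg : (1/2 : ℝ) • (α * (d - c) + c) + (1/2 : ℝ) • ((1 - α) * (d - c) + c)
          = (c + d) / 2 := by simp only [smul_eq_mul]; ring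
      rw [harg] at this
      simp only [smul_eq_mul] at this
      linarith
    calc f ((c + d) / 2) = ∫ _ in (0:ℝ)..1, f ((c + d) / 2) := by simp
      _ ≤ ∫ α in (0:ℝ)..1, (f (α * (d - c) + c) + f ((1 - α) * (d - c) + c)) / 2 := by
          apply intervalIntegral.integral_mono_on zero_le_one (by simp)
            ((hg.add hg').div_const 2)
          exact key
      _ = (∫ α in (0:ℝ)..1, f (α * (d - c) + c)) := by
          rw [intervalIntegral.integral_div, intervalIntegral.integral_add hg hg']
          have : (∫ α in (0:ℝ)..1, f ((1 - α) * (d - c) + c))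
              = ∫ α in (0:ℝ)..1, f (α * (d - c) + c) := by
            have := intervalIntegral.integral_comp_sub_left
              (fun α => f (α * (d - c) + c)) 1 (a := 0) (b := 1)
            simpa using this
          rw [this]; ring
  · have key : ∀ α ∈ Icc (0:ℝ) 1,
        f (α * (d - c) + c) ≤ (1 - α) * f c + α * f d := by
      intro α hα
      have hcmem : c ∈ Icc c d := ⟨le_refl c, hcd⟩
      have hdmem : d ∈ Icc c d := ⟨hcd, le_refl d⟩
      have := hconv.2 hcmem hdmem (by linarith [hα.2] : (0:ℝ) ≤ 1 - α) hα.1 (by ring)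
      have harg : (1 - α) • c + α • d = α * (d - c) + c := by
        simp only [smul_eq_mul]; ring
      rw [harg] at this
      exact this
    calc (∫ α in (0:ℝ)..1, f (α * (d - c) + c))
        ≤ ∫ α in (0:ℝ)..1, ((1 - α) * f c + α * f d) := by
          apply intervalIntegral.integral_mono_on zero_le_one hg
          · exact (Continuous.intervalIntegrable (by continuity) 0 1)
          · exact key
      _ = (f c + f d) / 2 := by
          have : (fun α : ℝ => (1 - α) * f c + α * f d)
              = fun α : ℝ => (f d - f c) * α + f c := by funext α; ring
          rw [this]
          rw [intervalIntegral.integral_add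
            ((Continuous.intervalIntegrable (by continuity) 0 1))
            (intervalIntegrable_const)]
          rw [intervalIntegral.integral_const_mul, integral_id,
            intervalIntegral.integral_const]
          norm_num
          ring

/-- Weighted refinement of the Hermite–Hadamard inequality: for a convex Riemann
integrable function `f : [a,b] → ℝ` and `t ∈ [0,1]`,
`f(tb+(1-t)a) ≤ (1-t)∫₀¹ f(tα(b-a)+a) dα + t∫₀¹ f((1-t)α(b-a)+tb+(1-t)a) dα
  ≤ t f(b) + (1-t) f(a)`. -/
theorem weighted_hermite_hadamard (a b : ℝ) (hab : a ≤ b) (f : ℝ → ℝ)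
    (hconv : ConvexOn ℝ (Icc a b) f)
    (hint : IntervalIntegrable f volume a b)
    (t : ℝ) (ht : t ∈ Icc (0:ℝ) 1) :
    f (t * b + (1 - t) * a) ≤
      (1 - t) * (∫ α in (0:ℝ)..1, f (t * α * (b - a) + a)) +
        t * (∫ α in (0:ℝ)..1, f ((1 - t) * α * (b - a) + t * b + (1 - t) * a)) ∧
    (1 - t) * (∫ α in (0:ℝ)..1, f (t * α * (b - a) + a)) +
        t * (∫ α in (0:ℝ)..1, f ((1 - t) * α * (b - a) + t * b + (1 - t) * a)) ≤
      t * f b + (1 - t) * f a := by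
  obtain ⟨ht0, ht1⟩ := ht
  set c := t * b + (1 - t) * a with hc
  have hac : a ≤ c := by nlinarith
  have hcb : c ≤ b := by nlinarith
  -- rewrite the two integrands
  have e1 : (∫ α in (0:ℝ)..1, f (t * α * (b - a) + a))
      = ∫ α in (0:ℝ)..1, f (α * (c - a) + a) := by
    congr 1; funext α; congr 1; rw [hc]; ring
  have e2 : (∫ α in (0:ℝ)..1, f ((1 - t) * α * (b - a) + t * b + (1 - t) * a))
      = ∫ α in (0:ℝ)..1, f (α * (b - c) + c) := by
    congr 1; funext α; congr 1; rw [hc]; ring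
  have hsub1 : Icc a c ⊆ Icc a b := Icc_subset_Icc le_rfl hcb
  have hsub2 : Icc c b ⊆ Icc a b := Icc_subset_Icc hac le_rfl
  have hconv1 : ConvexOn ℝ (Icc a c) f := hconv.subset hsub1 (convex_Icc a c)
  have hconv2 : ConvexOn ℝ (Icc c b) f := hconv.subset hsub2 (convex_Icc c b)
  have hint1 : IntervalIntegrable f volume a c :=
    hint.mono_set (by rw [uIcc_of_le hac, uIcc_of_le hab]; exact hsub1)
  have hint2 : IntervalIntegrable f volume c b :=
    hint.mono_set (by rw [uIcc_of_le hcb, uIcc_of_le hab]; exact hsub2)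
  obtain ⟨hl1, hu1⟩ := hh_aux f a c hac hconv1 hint1
  obtain ⟨hl2, hu2⟩ := hh_aux f c b hcb hconv2 hint2
  rw [e1, e2]
  constructor
  · -- f c ≤ (1-t) f((a+c)/2) + t f((c+b)/2) ≤ ...
    have hm1 : (a + c) / 2 ∈ Icc a b := ⟨by linarith, by linarith⟩
    have hm2 : (c + b) / 2 ∈ Icc a b := ⟨by linarith, by linarith⟩
    have hmid := hconv.2 hm1 hm2 (by linarith : (0:ℝ) ≤ 1 - t) ht0 (by ring)
    have harg : (1 - t) • ((a + c) / 2) + t • ((c + b) / 2) = c := by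
      simp only [smul_eq_mul]; rw [hc]; ring
    rw [harg] at hmid
    simp only [smul_eq_mul] at hmid
    nlinarith [mul_le_mul_of_nonneg_left hl1 (by linarith : (0:ℝ) ≤ 1 - t),
      mul_le_mul_of_nonneg_left hl2 ht0]
  · have hfc : f c ≤ t * f b + (1 - t) * f a := by
      have ha' : a ∈ Icc a b := ⟨le_refl a, hab⟩
      have hb' : b ∈ Icc a b := ⟨hab, le_refl b⟩
      have := hconv.2 hb' ha' ht0 (by linarith : (0:ℝ) ≤ 1 - t) (by ring)
      simpa [hc, smul_eq_mul] using this
    nlinarith [mul_le_mul_of_nonneg_left hu1 (by linarith : (0:ℝ) ≤ 1 - t),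
      mul_le_mul_of_nonneg_left hu2 ht0]
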